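/- Let x be an n×n matrix with entries in {0,1} having exactly n entries equal to 1. Then the vector Tx = (Σ_{k=1}^n x_{k,π(k)} : π ∈ S_n) is Hardy–Littlewood majorized by T(I_n), where I_n is the identity matrix. -/

import Mathlib

open scoped Classical

noncomputable def sumLargest {ι : Type*} [Fintype ι] (v : ι → ℝ) (m : ℕ) : ℝ :=
  sSup ((fun I : Finset ι => ∑ i ∈ I, v i) '' {I | I.card = m})

def Maj {ι : Type*} [Fintype ι] (a b : ι → ℝ) : Prop :=
  ∀ m : ℕ, 1 ≤ m → m ≤ Fintype.card ι → sumLargest a m ≤ sumLargest b m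

/-- The vector `Tx = (∑ k, x_{k, π k})_{π ∈ S_n}`. -/
def T (n : ℕ) (x : Fin n → Fin n → ℝ) : Equiv.Perm (Fin n) → ℝ :=
  fun π => ∑ k, x k (π k)

namespace L3

variable {ι : Type*} [Fintype ι]

lemma sum_le_sumLargest (v : ι → ℝ) {I : Finset ι} {m : ℕ} (h : I.card = m) :
    ∑ i ∈ I, v i ≤ sumLargest v m := by
  apply le_csSup
  · exact (Set.toFinite _).image _ |>.bddAbove
  · exact ⟨I, h, rfl⟩

lemma sumLargest_le (v : ι → ℝ) {m : ℕ} (hm : m ≤ Fintype.card ι) {c : ℝ}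
    (h : ∀ I : Finset ι, I.card = m → ∑ i ∈ I, v i ≤ c) : sumLargest v m ≤ c := by
  apply csSup_le
  · obtain ⟨t, -, ht⟩ := Finset.exists_subset_card_eq (s := (Finset.univ : Finset ι))
      (by simpa using hm)
    exact ⟨_, ⟨t, ht, rfl⟩⟩
  · rintro r ⟨I, hI, rfl⟩
    exact h I hI

end L3

namespace L3
variable {ι : Type*} [Fintype ι]

lemma pairing (a b : ι → ℝ) (e : ι ≃ ι) (hinv : ∀ i, e (e i) = i)
    (hsum : ∀ i, a i + a (e i) = b i + b (e i))
    (hmax : ∀ i, a i ≤ b i ∨ a i ≤ b (e i))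
    {m : ℕ} (hm : m ≤ Fintype.card ι) :
    sumLargest a m ≤ sumLargest b m := by
  classical
  apply sumLargest_le a hm
  intro S hS
  set D : Finset ι := S.filter (fun i => e i ∈ S) with hD
  set U : Finset ι := S.filter (fun i => e i ∉ S) with hU
  have hDU : Disjoint D U := by
    apply Finset.disjoint_filter_filter'
    exact disjoint_compl_right
  have hDUS : D ∪ U = S := by
    rw [hD, hU, Finset.filter_union_filter_not_eq]
  -- g picks the better element of each pair
  set g : ι → ι := fun i => if a i ≤ b i then i else e i with hg
  have hginj : Set.InjOn g U := by
    intro i₁ h₁ i₂ h₂ hgeq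
    simp only [hU, Finset.coe_filter, Set.mem_setOf_eq] at h₁ h₂
    by_cases c₁ : a i₁ ≤ b i₁ <;> by_cases c₂ : a i₂ ≤ b i₂ <;>
      simp only [hg, c₁, c₂, if_pos, if_neg, if_true, if_false] at hgeq
    · exact hgeq
    · exfalso; exact h₁.2 (hgeq ▸ (by rw [hinv i₂]; exact h₂.1))
    · exfalso; exact h₂.2 (hgeq ▸ (by rw [hinv i₁]; exact h₁.1))
    · have := congrArg e hgeq; rwa [hinv, hinv] at this
  have hgb : ∀ i ∈ U, a i ≤ b (g i) := by
    intro i _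
    by_cases c : a i ≤ b i
    · simpa [hg, c] using c
    · rcases hmax i with h | h
      · exact absurd h c
      · simpa [hg, c] using h
  -- D is e-invariant, so sums of a and b agree on D
  have heD : ∀ i ∈ D, e i ∈ D := by
    intro i hi
    simp only [hD, Finset.mem_filter] at hi ⊢
    exact ⟨hi.2, by rw [hinv]; exact hi.1⟩
  have hDimage : D.image e = D := by
    apply Finset.eq_of_subset_of_card_le
    · intro x hx
      obtain ⟨i, hi, rfl⟩ := Finset.mem_image.mp hx
      exact heD i hi
    · rw [Finset.card_image_of_injective _ e.injective]
  have hsumD : ∑ i ∈ D, a i = ∑ i ∈ D, b i := by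
    have h1 : ∑ i ∈ D, (a i + a (e i)) = ∑ i ∈ D, (b i + b (e i)) := by
      exact Finset.sum_congr rfl (fun i _ => hsum i)
    have h2 : ∑ i ∈ D, a (e i) = ∑ i ∈ D, a i := by
      rw [show (∑ i ∈ D, a (e i)) = ∑ i ∈ D.image e, a i from
        (Finset.sum_image (fun x _ y _ hxy => e.injective hxy)).symm, hDimage]
    have h3 : ∑ i ∈ D, b (e i) = ∑ i ∈ D, b i := by
      rw [show (∑ i ∈ D, b (e i)) = ∑ i ∈ D.image e, b i from
        (Finset.sum_image (fun x _ y _ hxy => e.injective hxy)).symm, hDimage]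
    simp only [Finset.sum_add_distrib, h2, h3] at h1
    linarith
  -- build S'
  set S' : Finset ι := D ∪ U.image g with hS'
  have hdisj : Disjoint D (U.image g) := by
    rw [Finset.disjoint_right]
    intro x hx
    obtain ⟨i, hi, rfl⟩ := Finset.mem_image.mp hx
    simp only [hU, Finset.mem_filter] at hi
    by_cases c : a i ≤ b i
    · simp only [hg, c, if_true]
      simp only [hD, Finset.mem_filter]
      rintro ⟨-, h⟩; exact hi.2 h
    · simp only [hg, c, if_false]
      simp only [hD, Finset.mem_filter]
      rintro ⟨h, -⟩; exact hi.2 h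
  have hcardS' : S'.card = m := by
    rw [hS', Finset.card_union_of_disjoint hdisj, Finset.card_image_of_injOn hginj,
      ← hS, ← hDUS, Finset.card_union_of_disjoint hDU]
  calc ∑ i ∈ S, a i = ∑ i ∈ D, a i + ∑ i ∈ U, a i := by
        rw [← hDUS, Finset.sum_union hDU]
    _ ≤ ∑ i ∈ D, b i + ∑ i ∈ U.image g, b i := by
        refine add_le_add (le_of_eq hsumD) ?_
        rw [Finset.sum_image (fun x hx y hy hxy => hginj (by exact_mod_cast hx) (by exact_mod_cast hy) hxy)]
        exact Finset.sum_le_sum hgb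
    _ = ∑ i ∈ S', b i := (Finset.sum_union hdisj).symm
    _ ≤ sumLargest b m := sum_le_sumLargest b hcardS'

end L3

namespace L3

noncomputable def W (n : ℕ) (E : Finset (Fin n × Fin n)) : Equiv.Perm (Fin n) → ℝ :=
  fun π => ((E.filter (fun p => π p.1 = p.2)).card : ℝ)

lemma W_insert (n : ℕ) (F : Finset (Fin n × Fin n)) (p : Fin n × Fin n) (hp : p ∉ F)
    (π : Equiv.Perm (Fin n)) :
    W n (insert p F) π = W n F π + (if π p.1 = p.2 then 1 else 0) := by
  unfold W
  rw [Finset.filter_insert]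
  split
  · rw [Finset.card_insert_of_notMem (fun h => hp (Finset.mem_filter.mp h).1)]
    push_cast; ring
  · simp

lemma row_move (n : ℕ) {m : ℕ} (hm : m ≤ Fintype.card (Equiv.Perm (Fin n)))
    (E : Finset (Fin n × Fin n)) (i i₀ j : Fin n)
    (hij : (i, j) ∈ E) (hrow : ∀ p ∈ E, p.1 ≠ i₀) :
    sumLargest (W n E) m ≤ sumLargest (W n (insert (i₀, j) (E.erase (i, j)))) m := by
  classical
  set F := E.erase (i, j) with hF
  have hi0F : (i₀, j) ∉ F := fun h => hrow _ (Finset.mem_of_mem_erase h) rfl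
  have hijF : (i, j) ∉ F := Finset.notMem_erase _ _
  have hEF : E = insert (i, j) F := (Finset.insert_erase hij).symm
  set τ : Equiv.Perm (Fin n) := Equiv.swap i i₀ with hτ
  have hii₀ : i ≠ i₀ := hrow _ hij
  have happ : ∀ π : Equiv.Perm (Fin n), (π * τ) i = π i₀ ∧ (π * τ) i₀ = π i := by
    intro π
    constructor
    · rw [Equiv.Perm.mul_apply, hτ, Equiv.swap_apply_left]
    · rw [Equiv.Perm.mul_apply, hτ, Equiv.swap_apply_right]
  have hWE : ∀ π : Equiv.Perm (Fin n),
      W n E π = W n F π + (if π i = j then 1 else 0) := by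
    intro π; rw [hEF, W_insert n F (i, j) hijF]
  have hWE' : ∀ π : Equiv.Perm (Fin n),
      W n (insert (i₀, j) F) π = W n F π + (if π i₀ = j then 1 else 0) := by
    intro π; rw [W_insert n F (i₀, j) hi0F]
  refine pairing _ _ (Equiv.mulRight τ) ?_ ?_ ?_ hm
  · intro π
    simp only [Equiv.coe_mulRight, mul_assoc, hτ, Equiv.swap_mul_self, mul_one]
  · intro π
    simp only [Equiv.coe_mulRight]
    rw [hWE π, hWE (π * τ), hWE' π, hWE' (π * τ), (happ π).1, (happ π).2]
    ring
  · intro π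
    simp only [Equiv.coe_mulRight]
    by_cases hc : π i = j
    · right
      rw [hWE π, hWE' (π * τ), (happ π).2, if_pos hc]
      have hsub : F.filter (fun p => π p.1 = p.2) ⊆ F.filter (fun p => (π * τ) p.1 = p.2) := by
        intro p hp
        rw [Finset.mem_filter] at hp ⊢
        refine ⟨hp.1, ?_⟩
        have hp1i : p.1 ≠ i := by
          rintro rfl
          have : p = (p.1, j) := by
            have := hp.2; rw [hc] at this; exact Prod.ext rfl this.symm
          exact hijF (this ▸ hp.1)
        have hp1i₀ : p.1 ≠ i₀ := hrow _ (Finset.mem_of_mem_erase hp.1)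
        rw [Equiv.Perm.mul_apply, hτ, Equiv.swap_apply_of_ne_of_ne hp1i hp1i₀]
        exact hp.2
      have := Finset.card_le_card hsub
      unfold W
      exact add_le_add (by exact_mod_cast this) le_rfl
    · left
      rw [hWE π, hWE' π, if_neg hc]
      have : (0:ℝ) ≤ if π i₀ = j then (1:ℝ) else 0 := by positivity
      linarith

end L3

namespace L3

lemma col_move (n : ℕ) {m : ℕ} (hm : m ≤ Fintype.card (Equiv.Perm (Fin n)))
    (E : Finset (Fin n × Fin n)) (i j j₀ : Fin n)
    (hij : (i, j) ∈ E) (hcol : ∀ p ∈ E, p.2 ≠ j₀) :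
    sumLargest (W n E) m ≤ sumLargest (W n (insert (i, j₀) (E.erase (i, j)))) m := by
  classical
  set F := E.erase (i, j) with hF
  have hi0F : (i, j₀) ∉ F := fun h => hcol _ (Finset.mem_of_mem_erase h) rfl
  have hijF : (i, j) ∉ F := Finset.notMem_erase _ _
  have hEF : E = insert (i, j) F := (Finset.insert_erase hij).symm
  set τ : Equiv.Perm (Fin n) := Equiv.swap j j₀ with hτ
  have hjj₀ : j ≠ j₀ := hcol _ hij
  have hcond1 : ∀ π : Equiv.Perm (Fin n), ((τ * π) i = j) ↔ (π i = j₀) := by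
    intro π
    rw [Equiv.Perm.mul_apply, hτ, Equiv.swap_apply_eq_iff, Equiv.swap_apply_left]
  have hcond2 : ∀ π : Equiv.Perm (Fin n), ((τ * π) i = j₀) ↔ (π i = j) := by
    intro π
    rw [Equiv.Perm.mul_apply, hτ, Equiv.swap_apply_eq_iff, Equiv.swap_apply_right]
  have hWE : ∀ π : Equiv.Perm (Fin n),
      W n E π = W n F π + (if π i = j then 1 else 0) := by
    intro π; rw [hEF, W_insert n F (i, j) hijF]
  have hWE' : ∀ π : Equiv.Perm (Fin n),
      W n (insert (i, j₀) F) π = W n F π + (if π i = j₀ then 1 else 0) := by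
    intro π; rw [W_insert n F (i, j₀) hi0F]
  refine pairing _ _ (Equiv.mulLeft τ) ?_ ?_ ?_ hm
  · intro π
    simp only [Equiv.coe_mulLeft, ← mul_assoc, hτ, Equiv.swap_mul_self, one_mul]
  · intro π
    simp only [Equiv.coe_mulLeft]
    rw [hWE π, hWE (τ * π), hWE' π, hWE' (τ * π)]
    rw [if_congr (hcond1 π) rfl rfl, if_congr (hcond2 π) rfl rfl]
    ring
  · intro π
    simp only [Equiv.coe_mulLeft]
    by_cases hc : π i = j
    · right
      rw [hWE π, hWE' (τ * π), if_pos hc, if_congr (hcond2 π) rfl rfl, if_pos hc]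
      have hsub : F.filter (fun p => π p.1 = p.2) ⊆ F.filter (fun p => (τ * π) p.1 = p.2) := by
        intro p hp
        rw [Finset.mem_filter] at hp ⊢
        refine ⟨hp.1, ?_⟩
        have hp2j : p.2 ≠ j := by
          rintro hj
          have hp1 : p.1 = i := π.injective (by rw [hp.2, hj, hc])
          exact hijF (by rw [show p = (i, j) from Prod.ext hp1 hj] at hp; exact hp.1)
        have hp2j₀ : p.2 ≠ j₀ := hcol _ (Finset.mem_of_mem_erase hp.1)
        rw [Equiv.Perm.mul_apply, hp.2, hτ, Equiv.swap_apply_of_ne_of_ne hp2j hp2j₀]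
      have := Finset.card_le_card hsub
      unfold W
      exact add_le_add (by exact_mod_cast this) le_rfl
    · left
      rw [hWE π, hWE' π, if_neg hc]
      have : (0:ℝ) ≤ if π i = j₀ then (1:ℝ) else 0 := by positivity
      linarith

end L3

namespace L3

lemma perm_case (n : ℕ) {m : ℕ} (hm : m ≤ Fintype.card (Equiv.Perm (Fin n)))
    (E : Finset (Fin n × Fin n)) (hcard : E.card = n)
    (hr : (E.image Prod.fst).card = n) (hc : (E.image Prod.snd).card = n) :
    sumLargest (W n E) m ≤ sumLargest (T n fun i j => if i = j then (1:ℝ) else 0) m := by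
  classical
  have hfst_inj : Set.InjOn Prod.fst (E : Set (Fin n × Fin n)) :=
    Finset.card_image_iff.mp (by rw [hr, hcard])
  have hsnd_inj : Set.InjOn Prod.snd (E : Set (Fin n × Fin n)) :=
    Finset.card_image_iff.mp (by rw [hc, hcard])
  have hruniv : E.image Prod.fst = Finset.univ :=
    Finset.eq_univ_of_card _ (by rw [hr, Fintype.card_fin])
  have hex : ∀ k : Fin n, ∃ j, (k, j) ∈ E := by
    intro k
    have : k ∈ E.image Prod.fst := hruniv ▸ Finset.mem_univ k
    obtain ⟨p, hp, hpk⟩ := Finset.mem_image.mp this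
    exact ⟨p.2, by rwa [← hpk, Prod.mk.eta]⟩
  set σ0 : Fin n → Fin n := fun k => Classical.choose (hex k) with hσ0def
  have hσ0 : ∀ k, (k, σ0 k) ∈ E := fun k => Classical.choose_spec (hex k)
  have hinj : Function.Injective σ0 := by
    intro k₁ k₂ hk
    have := hsnd_inj (Finset.mem_coe.mpr (hσ0 k₁)) (Finset.mem_coe.mpr (hσ0 k₂))
      (by simpa using hk)
    simpa using congrArg Prod.fst this
  set σe : Equiv.Perm (Fin n) := Equiv.ofBijective σ0 (Finite.injective_iff_bijective.mp hinj)
    with hσedef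
  have hσe : ∀ k, σe k = σ0 k := fun k => rfl
  have hval : ∀ p ∈ E, p.2 = σ0 p.1 := by
    intro p hp
    have := hfst_inj (Finset.mem_coe.mpr hp) (Finset.mem_coe.mpr (hσ0 p.1)) rfl
    exact congrArg Prod.snd this
  have hpoint : ∀ π : Equiv.Perm (Fin n),
      W n E π = T n (fun i j => if i = j then (1:ℝ) else 0) (σe⁻¹ * π) := by
    intro π
    have hT : T n (fun i j => if i = j then (1:ℝ) else 0) (σe⁻¹ * π)
        = ((Finset.univ.filter (fun k : Fin n => σ0 k = π k)).card : ℝ) := by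
      unfold T
      rw [← Finset.sum_boole]
      refine Finset.sum_congr rfl (fun k _ => ?_)
      have hiff : (k = (σe⁻¹ * π) k) ↔ (σ0 k = π k) := by
        rw [Equiv.Perm.mul_apply]
        constructor
        · intro h
          have h2 := congrArg σe h
          simp only [Equiv.Perm.inv_def, Equiv.apply_symm_apply] at h2
          rw [← hσe k]
          exact h2
        · intro h
          rw [← h, ← hσe k]
          simp
      show (if k = (σe⁻¹ * π) k then (1:ℝ) else 0) = _
      rw [if_congr hiff rfl rfl]
    rw [hT]
    unfold W
    congr 1
    apply Finset.card_bij (fun p _ => p.1)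
    · intro p hp
      rw [Finset.mem_filter] at hp
      simp only [Finset.mem_filter, Finset.mem_univ, true_and]
      rw [← hval p hp.1, hp.2]
    · intro p₁ h₁ p₂ h₂ h
      exact hfst_inj (Finset.mem_coe.mpr (Finset.mem_filter.mp h₁).1)
        (Finset.mem_coe.mpr (Finset.mem_filter.mp h₂).1) h
    · intro k hk
      rw [Finset.mem_filter] at hk
      refine ⟨(k, σ0 k), Finset.mem_filter.mpr ⟨hσ0 k, ?_⟩, rfl⟩
      simpa using hk.2.symm
  apply sumLargest_le _ hm
  intro S hS
  have hinjS : Function.Injective (fun π : Equiv.Perm (Fin n) => σe⁻¹ * π) :=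
    fun π₁ π₂ h => by simpa using mul_left_cancel h
  calc ∑ π ∈ S, W n E π
      = ∑ π ∈ S, T n (fun i j => if i = j then (1:ℝ) else 0) (σe⁻¹ * π) :=
        Finset.sum_congr rfl (fun π _ => hpoint π)
    _ = ∑ π ∈ S.image (fun π => σe⁻¹ * π), T n (fun i j => if i = j then (1:ℝ) else 0) π :=
        (Finset.sum_image (fun x _ y _ h => hinjS h)).symm
    _ ≤ sumLargest (T n fun i j => if i = j then (1:ℝ) else 0) m :=
        sum_le_sumLargest _ (by rw [Finset.card_image_of_injective _ hinjS, hS])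

end L3

namespace L3

lemma exists_double {n : ℕ} (E : Finset (Fin n × Fin n)) (f : Fin n × Fin n → Fin n)
    (hcard : E.card = n) (hlt : (E.image f).card < n) :
    ∃ p ∈ E, ∃ q ∈ E, p ≠ q ∧ f p = f q := by
  classical
  have hsum : E.card = ∑ i ∈ E.image f, (E.filter (fun p => f p = i)).card :=
    Finset.card_eq_sum_card_fiberwise (fun p hp => Finset.mem_image_of_mem _ hp)
  have hlt2 : ∑ i ∈ E.image f, 1 < ∑ i ∈ E.image f, (E.filter (fun p => f p = i)).card := by
    rw [Finset.sum_const, smul_eq_mul, mul_one, ← hsum, hcard]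
    exact hlt
  obtain ⟨i, hi, hi2⟩ := Finset.exists_lt_of_sum_lt hlt2
  obtain ⟨p, hp, q, hq, hpq⟩ := Finset.one_lt_card.mp hi2
  rw [Finset.mem_filter] at hp hq
  exact ⟨p, hp.1, q, hq.1, hpq, by rw [hp.2, hq.2]⟩

lemma image_mono_of_erase {n : ℕ} (E E' : Finset (Fin n × Fin n)) (p : Fin n × Fin n)
    (hsub : E.erase p ⊆ E') (f : Fin n × Fin n → Fin n) (hfp : f p ∈ E'.image f) :
    E.image f ⊆ E'.image f := by
  intro x hx
  obtain ⟨s, hs, rfl⟩ := Finset.mem_image.mp hx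
  by_cases hsp : s = p
  · subst hsp; exact hfp
  · exact Finset.mem_image_of_mem _ (hsub (Finset.mem_erase.mpr ⟨hsp, hs⟩))

lemma main_induction (n : ℕ) {m : ℕ} (hm : m ≤ Fintype.card (Equiv.Perm (Fin n))) :
    ∀ d : ℕ, ∀ E : Finset (Fin n × Fin n), E.card = n →
      (n - (E.image Prod.fst).card) + (n - (E.image Prod.snd).card) ≤ d →
      sumLargest (W n E) m ≤ sumLargest (T n fun i j => if i = j then (1:ℝ) else 0) m := by
  intro d
  induction d with
  | zero =>
    intro E hcard hmeas
    have hr : (E.image Prod.fst).card ≤ n := by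
      simpa using (Finset.card_le_univ (E.image Prod.fst))
    have hc : (E.image Prod.snd).card ≤ n := by
      simpa using (Finset.card_le_univ (E.image Prod.snd))
    exact perm_case n hm E hcard (by omega) (by omega)
  | succ d ih =>
    intro E hcard hmeas
    have hrle : (E.image Prod.fst).card ≤ n := by
      simpa using (Finset.card_le_univ (E.image Prod.fst))
    have hcle : (E.image Prod.snd).card ≤ n := by
      simpa using (Finset.card_le_univ (E.image Prod.snd))
    by_cases hrfull : (E.image Prod.fst).card = n
    · by_cases hcfull : (E.image Prod.snd).card = n
      · exact perm_case n hm E hcard hrfull hcfull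
      · -- a column is empty: do a column move
        have hclt : (E.image Prod.snd).card < n := lt_of_le_of_ne hcle hcfull
        obtain ⟨p, hp, q, hq, hpq, hfeq⟩ := exists_double E Prod.snd hcard hclt
        have hne : E.image Prod.snd ≠ Finset.univ := by
          intro h; rw [h] at hclt; simp at hclt
        obtain ⟨j₀, hj₀⟩ : ∃ j₀, j₀ ∉ E.image Prod.snd := by
          by_contra h
          push_neg at h
          exact hne (Finset.eq_univ_iff_forall.mpr h)
        have hcolempty : ∀ r ∈ E, r.2 ≠ j₀ := by
          intro r hr hrj
          exact hj₀ (hrj ▸ Finset.mem_image_of_mem _ hr)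
        have hpE : (p.1, p.2) ∈ E := by rwa [Prod.mk.eta]
        set E' := insert (p.1, j₀) (E.erase (p.1, p.2)) with hE'def
        have hsubE' : E.erase p ⊆ E' := by
          have heq : E.erase (p.1, p.2) = E.erase p := by rw [Prod.mk.eta]
          rw [hE'def, heq]
          exact Finset.subset_insert _ _
        have hnotmem : (p.1, j₀) ∉ E.erase (p.1, p.2) := by
          intro h
          exact hcolempty _ (Finset.mem_of_mem_erase h) rfl
        have hcard' : E'.card = n := by
          rw [hE'def, Finset.card_insert_of_notMem hnotmem, Finset.card_erase_of_mem hpE,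
            hcard]
          have : 0 < n := hcard ▸ Finset.card_pos.mpr ⟨p, hp⟩
          omega
        have hrows' : E.image Prod.fst ⊆ E'.image Prod.fst := by
          apply image_mono_of_erase E E' p hsubE'
          exact Finset.mem_image.mpr ⟨(p.1, j₀), Finset.mem_insert_self _ _, rfl⟩
        have hcols' : insert j₀ (E.image Prod.snd) ⊆ E'.image Prod.snd := by
          apply Finset.insert_subset
          · exact Finset.mem_image_of_mem _ (Finset.mem_insert_self _ _)
          · apply image_mono_of_erase E E' p hsubE'
            apply Finset.mem_image.mpr
            refine ⟨q, hsubE' (Finset.mem_erase.mpr ⟨fun h => hpq h.symm, hq⟩), hfeq.symm⟩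
        have hr' : (E.image Prod.fst).card ≤ (E'.image Prod.fst).card :=
          Finset.card_le_card hrows'
        have hc' : (E.image Prod.snd).card + 1 ≤ (E'.image Prod.snd).card := by
          have := Finset.card_le_card hcols'
          rwa [Finset.card_insert_of_notMem hj₀] at this
        refine le_trans (col_move n hm E p.1 p.2 j₀ hpE hcolempty) ?_
        exact ih E' hcard' (by omega)
    · -- a row is empty: do a row move
      have hrlt : (E.image Prod.fst).card < n := lt_of_le_of_ne hrle hrfull
      obtain ⟨p, hp, q, hq, hpq, hfeq⟩ := exists_double E Prod.fst hcard hrlt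
      have hne : E.image Prod.fst ≠ Finset.univ := by
        intro h; rw [h] at hrlt; simp at hrlt
      obtain ⟨i₀, hi₀⟩ : ∃ i₀, i₀ ∉ E.image Prod.fst := by
        by_contra h
        push_neg at h
        exact hne (Finset.eq_univ_iff_forall.mpr h)
      have hrowempty : ∀ r ∈ E, r.1 ≠ i₀ := by
        intro r hr hri
        exact hi₀ (hri ▸ Finset.mem_image_of_mem _ hr)
      have hpE : (p.1, p.2) ∈ E := by rwa [Prod.mk.eta]
      set E' := insert (i₀, p.2) (E.erase (p.1, p.2)) with hE'def
      have hsubE' : E.erase p ⊆ E' := by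
        have heq : E.erase (p.1, p.2) = E.erase p := by rw [Prod.mk.eta]
        rw [hE'def, heq]
        exact Finset.subset_insert _ _
      have hnotmem : (i₀, p.2) ∉ E.erase (p.1, p.2) := by
        intro h
        exact hrowempty _ (Finset.mem_of_mem_erase h) rfl
      have hcard' : E'.card = n := by
        rw [hE'def, Finset.card_insert_of_notMem hnotmem, Finset.card_erase_of_mem hpE,
          hcard]
        have : 0 < n := hcard ▸ Finset.card_pos.mpr ⟨p, hp⟩
        omega
      have hcols' : E.image Prod.snd ⊆ E'.image Prod.snd := by
        apply image_mono_of_erase E E' p hsubE'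
        exact Finset.mem_image.mpr ⟨(i₀, p.2), Finset.mem_insert_self _ _, rfl⟩
      have hrows' : insert i₀ (E.image Prod.fst) ⊆ E'.image Prod.fst := by
        apply Finset.insert_subset
        · exact Finset.mem_image_of_mem _ (Finset.mem_insert_self _ _)
        · apply image_mono_of_erase E E' p hsubE'
          apply Finset.mem_image.mpr
          refine ⟨q, hsubE' (Finset.mem_erase.mpr ⟨fun h => hpq h.symm, hq⟩), hfeq.symm⟩
      have hc' : (E.image Prod.snd).card ≤ (E'.image Prod.snd).card :=
        Finset.card_le_card hcols'
      have hr' : (E.image Prod.fst).card + 1 ≤ (E'.image Prod.fst).card := by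
        have := Finset.card_le_card hrows'
        rwa [Finset.card_insert_of_notMem hi₀] at this
      refine le_trans (row_move n hm E p.1 i₀ p.2 hpE hrowempty) ?_
      exact ih E' hcard' (by omega)

end L3

theorem lemma3 (n : ℕ) (x : Fin n → Fin n → ℝ)
    (h01 : ∀ i j, x i j = 0 ∨ x i j = 1)
    (hcard : (Finset.univ.filter (fun p : Fin n × Fin n => x p.1 p.2 = 1)).card = n) :
    Maj (T n x) (T n (fun i j => if i = j then (1 : ℝ) else 0)) := by
  classical
  intro m hm1 hm2
  set E := Finset.univ.filter (fun p : Fin n × Fin n => x p.1 p.2 = 1) with hE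
  have hTW : T n x = L3.W n E := by
    funext π
    unfold T L3.W
    have hterm : ∀ k, x k (π k) = if x k (π k) = 1 then (1:ℝ) else 0 := by
      intro k; rcases h01 k (π k) with h | h <;> simp [h]
    rw [Finset.sum_congr rfl (fun k _ => hterm k), Finset.sum_boole]
    congr 1
    apply Finset.card_bij (fun k _ => (k, π k))
    · intro k hk
      rw [Finset.mem_filter] at hk ⊢
      refine ⟨Finset.mem_filter.mpr ⟨Finset.mem_univ _, hk.2⟩, rfl⟩
    · intro k₁ h₁ k₂ h₂ h
      exact congrArg Prod.fst h
    · intro p hp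
      rw [Finset.mem_filter] at hp
      have hpE := Finset.mem_filter.mp hp.1
      refine ⟨p.1, Finset.mem_filter.mpr ⟨Finset.mem_univ _, ?_⟩, ?_⟩
      · rw [hp.2]; exact hpE.2
      · rw [hp.2]
  rw [hTW]
  exact L3.main_induction n hm2 (2 * n) E hcard
    (by have := Nat.sub_le n (E.image Prod.fst).card
        have := Nat.sub_le n (E.image Prod.snd).card
        omega)
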